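/- Let X be a real-valued random variable with finite fourth moment and E[|X|] > 0. Then Var[X^2] / (E[X^2])^2 ≥ Var[|X|] / (E[|X|])^2. -/

import Mathlib

open MeasureTheory ProbabilityTheory ENNReal

lemma var_aux_ne_top1 : (4:ℝ≥0∞)/(2/3) ≠ ⊤ :=
  (ENNReal.div_lt_top (by finiteness) (by simp [ENNReal.div_eq_zero_iff])).ne

lemma var_aux_ne_top2 : (4:ℝ≥0∞)/(4/3) ≠ ⊤ :=
  (ENNReal.div_lt_top (by finiteness) (by simp [ENNReal.div_eq_zero_iff])).ne

/-- If `X` is a real random variable with finite fourth moment and `E[|X|] > 0`, then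
`Var[X²]/(E[X²])² ≥ Var[|X|]/(E[|X|])²`. -/
theorem var_sq_ratio_ge {Ω : Type*} [MeasureSpace Ω]
    [IsProbabilityMeasure (ℙ : Measure Ω)] (X : Ω → ℝ)
    (h4 : MemLp X 4 ℙ) (hpos : 0 < ∫ ω, |X ω|) :
    variance (fun ω => |X ω|) ℙ / (∫ ω, |X ω|) ^ 2 ≤
      variance (fun ω => (X ω) ^ 2) ℙ / (∫ ω, (X ω) ^ 2) ^ 2 := by
  set a := ∫ ω, |X ω| with ha
  set b := ∫ ω, (X ω) ^ 2 with hb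
  set c := ∫ ω, (X ω) ^ 4 with hc
  -- MemLp facts
  have h2 : MemLp X 2 ℙ := h4.mono_exponent (by norm_num)
  have habs2 : MemLp (fun ω => |X ω|) 2 ℙ := by
    simpa [Real.norm_eq_abs] using h2.norm
  have hsq2 : MemLp (fun ω => (X ω) ^ 2) 2 ℙ := by
    have h := h4.norm_rpow_div 2
    norm_num at h
    have e : (4:ℝ≥0∞)/2 = 2 := by
      rw [← ENNReal.toReal_eq_toReal_iff' ((ENNReal.div_lt_top (by finiteness) (by norm_num)).ne)
        (by finiteness), ENNReal.toReal_div]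
      norm_num
    rwa [e] at h
  -- Hölder: b ≤ a^(2/3) * c^(1/3)
  have hf32 : MemLp (fun ω => |X ω| ^ ((2:ℝ)/3)) (ENNReal.ofReal (3/2)) ℙ := by
    have h := h4.norm_rpow_div ((2:ℝ≥0∞)/3)
    rw [show ((2:ℝ≥0∞)/3).toReal = (2:ℝ)/3 by simp [ENNReal.toReal_div]] at h
    simp only [Real.norm_eq_abs] at h
    refine h.mono_exponent ?_
    rw [← ENNReal.toReal_le_toReal (by finiteness) var_aux_ne_top1,
      ENNReal.toReal_ofReal (by norm_num), ENNReal.toReal_div, ENNReal.toReal_div]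
    norm_num
  have hg3 : MemLp (fun ω => |X ω| ^ ((4:ℝ)/3)) (ENNReal.ofReal 3) ℙ := by
    have h := h4.norm_rpow_div ((4:ℝ≥0∞)/3)
    rw [show ((4:ℝ≥0∞)/3).toReal = (4:ℝ)/3 by simp [ENNReal.toReal_div]] at h
    simp only [Real.norm_eq_abs] at h
    refine h.mono_exponent ?_
    rw [← ENNReal.toReal_le_toReal (by finiteness) var_aux_ne_top2,
      ENNReal.toReal_ofReal (by norm_num), ENNReal.toReal_div, ENNReal.toReal_div]
    norm_num
  have hpq : Real.HolderConjugate (3/2) 3 := ⟨by norm_num, by norm_num, by norm_num⟩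
  have key := integral_mul_norm_le_Lp_mul_Lq hpq hf32 hg3
  have keyb : b ≤ a ^ ((2:ℝ)/3) * c ^ ((1:ℝ)/3) := by
    have e1 : ∀ ω, ‖|X ω| ^ ((2:ℝ)/3)‖ * ‖|X ω| ^ ((4:ℝ)/3)‖ = (X ω) ^ 2 := by
      intro ω
      rw [Real.norm_eq_abs, Real.norm_eq_abs,
        abs_of_nonneg (Real.rpow_nonneg (abs_nonneg _) _),
        abs_of_nonneg (Real.rpow_nonneg (abs_nonneg _) _),
        ← Real.rpow_add_of_nonneg (abs_nonneg _) (by norm_num) (by norm_num)]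
      norm_num
    have e2 : ∀ ω, ‖|X ω| ^ ((2:ℝ)/3)‖ ^ ((3:ℝ)/2) = |X ω| := by
      intro ω
      rw [Real.norm_eq_abs, abs_of_nonneg (Real.rpow_nonneg (abs_nonneg _) _),
        ← Real.rpow_mul (abs_nonneg _)]
      norm_num
    have e3 : ∀ ω, ‖|X ω| ^ ((4:ℝ)/3)‖ ^ ((3:ℝ)) = (X ω) ^ 4 := by
      intro ω
      rw [Real.norm_eq_abs, abs_of_nonneg (Real.rpow_nonneg (abs_nonneg _) _),
        ← Real.rpow_mul (abs_nonneg _)]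
      norm_num
      rw [pow_abs,
        abs_of_nonneg (by positivity : (0:ℝ) ≤ X ω ^ 4)]
    simp only [e1, e2, e3] at key
    rw [show (1:ℝ)/(3/2) = 2/3 by norm_num] at key
    exact key
  have hb0 : 0 ≤ b := by
    rw [hb]; positivity
  have hc0 : 0 ≤ c := by
    rw [hc]
    refine integral_nonneg fun ω => by positivity
  have hcube : b ^ 3 ≤ c * a ^ 2 := by
    calc b ^ 3 ≤ (a ^ ((2:ℝ)/3) * c ^ ((1:ℝ)/3)) ^ 3 := by
          exact pow_le_pow_left₀ hb0 keyb 3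
      _ = c * a ^ 2 := by
          rw [mul_pow, ← Real.rpow_natCast (a ^ ((2:ℝ)/3)) 3,
            ← Real.rpow_natCast (c ^ ((1:ℝ)/3)) 3,
            ← Real.rpow_mul hpos.le, ← Real.rpow_mul hc0]
          norm_num
          ring
  -- variance computations
  have hVabs : variance (fun ω => |X ω|) ℙ = b - a ^ 2 := by
    rw [variance_eq_sub habs2]
    congr 1
    · rw [hb]
      refine integral_congr_ae (Filter.Eventually.of_forall fun ω => ?_)
      simp [sq_abs]
  have hVsq : variance (fun ω => (X ω) ^ 2) ℙ = c - b ^ 2 := by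
    rw [variance_eq_sub hsq2]
    congr 1
    · rw [hc]
      refine integral_congr_ae (Filter.Eventually.of_forall fun ω => ?_)
      simp [← pow_mul]
  have hab : a ^ 2 ≤ b := by
    have := variance_nonneg (fun ω => |X ω|) ℙ
    rw [hVabs] at this; linarith
  have hbpos : 0 < b := lt_of_lt_of_le (by positivity) hab
  rw [hVabs, hVsq, div_le_div_iff₀ (by positivity) (by positivity)]
  nlinarith [sq_nonneg a, sq_nonneg b, hcube, hbpos, hpos]
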